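/- Let k be a field, A a finite-dimensional k-algebra, and U ⊆ T two torsion classes in mod A. Then T = U if and only if there exists no brick S with S ∈ T and Hom_A(U', S) = 0 for every U' ∈ U. -/

import Mathlib

universe u

/-- A torsion class in the category `mod A` of finitely generated `A`-modules:
a class of finitely generated modules, containing the zero modules, closed under
isomorphism, images of surjective homomorphisms (factor modules) and extensions. -/
def IsTorsionClass (A : Type u) [Ring A] (T : Set (ModuleCat.{u} A)) : Prop :=
  (∀ M ∈ T, Module.Finite A M) ∧
  (∀ M : ModuleCat.{u} A, Subsingleton M → M ∈ T) ∧
  (∀ M N : ModuleCat.{u} A, M ∈ T → Nonempty (M ≃ₗ[A] N) → N ∈ T) ∧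
  (∀ (M N : ModuleCat.{u} A) (f : M →ₗ[A] N), Function.Surjective f → M ∈ T → N ∈ T) ∧
  (∀ (M : ModuleCat.{u} A) (S : Submodule A M),
     ModuleCat.of A S ∈ T → ModuleCat.of A (M ⧸ S) ∈ T → M ∈ T)

/-- The smallest torsion class containing a class `C` of modules: the intersection of
all torsion classes containing `C`. -/
def torsGen (A : Type u) [Ring A] (C : Set (ModuleCat.{u} A)) : Set (ModuleCat.{u} A) :=
  ⋂₀ {T | IsTorsionClass A T ∧ C ⊆ T}

/-- A brick: a nonzero finitely generated module all of whose nonzero endomorphisms are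
invertible. -/
def IsBrick (A : Type u) [Ring A] (S : ModuleCat.{u} A) : Prop :=
  Nontrivial S ∧ Module.Finite A S ∧ ∀ f : S →ₗ[A] S, f ≠ 0 → Function.Bijective f

attribute [local instance] RestrictScalars.moduleOrig

instance restrictScalarsAddCommMonoidGrp {R S V : Type*} [AddCommGroup V] :
    AddCommMonoid (RestrictScalars R S V) :=
  AddCommGroup.toAddCommMonoid

noncomputable instance restrictScalarsModuleGrp {R S V : Type*} [CommSemiring R] [Semiring S]
    [Algebra R S] [AddCommGroup V] [Module S V] : Module R (RestrictScalars R S V) :=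
  RestrictScalars.module R S V

def restrictScalarsModuleOrigGrp {R S V : Type*} [Semiring S] [AddCommGroup V] [Module S V] :
    Module S (RestrictScalars R S V) :=
  RestrictScalars.moduleOrig R S V

attribute [local instance] restrictScalarsModuleOrigGrp

instance restrictScalarsTowerGrp {R S V : Type*} [CommSemiring R] [Semiring S]
    [Algebra R S] [AddCommGroup V] [Module S V] : IsScalarTower R S (RestrictScalars R S V) :=
  RestrictScalars.isScalarTower R S V

section aux

variable (k A : Type u) [Field k] [Ring A] [Algebra k A] [FiniteDimensional k A]
variable (M N : Type u) [AddCommGroup M] [Module A M] [AddCommGroup N] [Module A N]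

/-- k-dimension of an A-module. -/
noncomputable def kdim : ℕ := Module.finrank k (RestrictScalars k A M)

lemma kdim_finite [h : Module.Finite A M] : Module.Finite k (RestrictScalars k A M) := by
  haveI : Module.Finite A (RestrictScalars k A M) := h
  exact Module.Finite.trans A (RestrictScalars k A M)

lemma kdim_lt [Module.Finite A M] (f : M →ₗ[A] N) (hs : Function.Surjective f)
    (hi : ¬ Function.Injective f) : kdim k A N < kdim k A M := by
  haveI := kdim_finite k A M
  let fk : RestrictScalars k A M →ₗ[k] RestrictScalars k A N :=
    { toFun := f, map_add' := f.map_add, map_smul' := fun c x => f.map_smul (algebraMap k A c) x }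
  have hsk : Function.Surjective fk := hs
  have hik : ¬ Function.Injective fk := hi
  have h1 := LinearMap.finrank_range_add_finrank_ker fk
  have h2 : LinearMap.range fk = ⊤ := LinearMap.range_eq_top.2 hsk
  have h3 : LinearMap.ker fk ≠ ⊥ := fun h => hik (LinearMap.ker_eq_bot.1 h)
  have h4 : 0 < Module.finrank k (LinearMap.ker fk) := by
    rcases Nat.eq_zero_or_pos (Module.finrank k (LinearMap.ker fk)) with h | h
    · exact absurd (Submodule.finrank_eq_zero.1 h) h3
    · exact h
  rw [h2, finrank_top] at h1
  unfold kdim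
  omega

omit [FiniteDimensional k A] in
include k in
lemma kdim_inj_surj [FiniteDimensional k A] [Module.Finite A M] (f : M →ₗ[A] M) (hi : Function.Injective f) :
    Function.Surjective f := by
  haveI := kdim_finite k A M
  let fk : RestrictScalars k A M →ₗ[k] RestrictScalars k A M :=
    { toFun := f, map_add' := f.map_add, map_smul' := fun c x => f.map_smul (algebraMap k A c) x }
  have : Function.Injective fk := hi
  exact LinearMap.surjective_of_injective (f := fk) this

end aux

/-- For torsion classes `U ⊆ T` in `mod A`, one has `T = U` if and only if there is no
brick `S` with `S ∈ T` and `Hom_A(U', S) = 0` for every `U' ∈ U`. -/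
theorem tors_eq_iff_no_brick (k A : Type u) [Field k] [Ring A] [Algebra k A]
    [FiniteDimensional k A]
    (T U : Set (ModuleCat.{u} A)) (hT : IsTorsionClass A T) (hU : IsTorsionClass A U)
    (hUT : U ⊆ T) :
    T = U ↔ ¬ ∃ S : ModuleCat.{u} A, IsBrick A S ∧ S ∈ T ∧
      ∀ U' ∈ U, ∀ f : U' →ₗ[A] S, f = 0 := by
  obtain ⟨hTfin, hTzero, hTiso, hTquot, hText⟩ := hT
  obtain ⟨hUfin, hUzero, hUiso, hUquot, hUext⟩ := hU
  constructor
  · rintro rfl ⟨S, ⟨hnt, -, -⟩, hSU, hhom⟩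
    have h0 : (LinearMap.id : S →ₗ[A] S) = 0 := hhom S hSU _
    obtain ⟨x, y, hxy⟩ := hnt
    have hx : x = 0 := DFunLike.congr_fun h0 x
    have hy : y = 0 := DFunLike.congr_fun h0 y
    exact hxy (hx.trans hy.symm)
  · intro hno
    have key : ∀ n : ℕ, ∀ N : ModuleCat.{u} A, N ∈ T → kdim k A N < n → N ∈ U := by
      intro n
      induction n with
      | zero => intro N _ h; omega
      | succ n ih =>
        intro N hNT hdim
        by_contra hNU
        haveI hfin : Module.Finite A N := hTfin N hNT
        have hdim' : kdim k A N ≤ n := Nat.lt_succ_iff.1 hdim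
        have hnt : Nontrivial N := by
          rcases subsingleton_or_nontrivial N with h | h
          · exact absurd (hUzero N h) hNU
          · exact h
        -- Hom(U, N) = 0
        have hhom : ∀ U' ∈ U, ∀ g : U' →ₗ[A] N, g = 0 := by
          intro U' hU' g
          by_contra hg
          set R := LinearMap.range g with hR
          have hRbot : R ≠ ⊥ := fun h => hg (LinearMap.range_eq_bot.1 h)
          have hRU : ModuleCat.of A R ∈ U :=
            hUquot U' (ModuleCat.of A R) g.rangeRestrict g.surjective_rangeRestrict hU'
          have hQT : ModuleCat.of A (N ⧸ R) ∈ T :=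
            hTquot N (ModuleCat.of A (↥N ⧸ R)) R.mkQ R.mkQ_surjective hNT
          have hlt : kdim k A (↥N ⧸ R) < kdim k A N := by
            apply kdim_lt k A N _ R.mkQ R.mkQ_surjective
            intro hinj
            apply hRbot
            rw [← R.ker_mkQ]
            exact LinearMap.ker_eq_bot.2 hinj
          have hQU : ModuleCat.of A (↥N ⧸ R) ∈ U :=
            ih _ hQT (show kdim k A (↥N ⧸ R) < n from lt_of_lt_of_le hlt hdim')
          exact hNU (hUext N R hRU hQU)
        -- N is a brick
        have hbij : ∀ f : N →ₗ[A] N, f ≠ 0 → Function.Bijective f := by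
          intro f hf
          have hinj : Function.Injective f := by
            by_contra hinj
            set R := LinearMap.range f with hR
            have hRT : ModuleCat.of A R ∈ T :=
              hTquot N (ModuleCat.of A R) f.rangeRestrict f.surjective_rangeRestrict hNT
            have hni : ¬ Function.Injective f.rangeRestrict := fun h =>
              hinj fun x y hxy => h (Subtype.ext hxy)
            have hlt : kdim k A R < kdim k A N :=
              kdim_lt k A N R f.rangeRestrict f.surjective_rangeRestrict hni
            have hRU : ModuleCat.of A R ∈ U :=
              ih _ hRT (show kdim k A R < n from lt_of_lt_of_le hlt hdim')
            have hz : R.subtype = (0 : R →ₗ[A] N) := hhom (ModuleCat.of A R) hRU R.subtype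
            apply hf
            ext x
            have hm : f x ∈ R := LinearMap.mem_range_self f x
            have : R.subtype ⟨f x, hm⟩ = (0 : R →ₗ[A] ↥N) ⟨f x, hm⟩ := by rw [hz]
            simpa using this
          exact ⟨hinj, kdim_inj_surj k A N f hinj⟩
        exact hno ⟨N, ⟨hnt, hfin, hbij⟩, hNT, hhom⟩
    apply Set.Subset.antisymm _ hUT
    intro M hMT
    exact key (kdim k A M + 1) M hMT (Nat.lt_succ_self _)
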